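/- Let G = (X, M) be a hypergraph and let G̃ be the hypergraph obtained from G by adding, for each edge E ∈ M, two new vertices to E (the added vertices being pairwise distinct for distinct edges and disjoint from X). Then: (1) every automorphism of G̃ that maps X to X restricts to an automorphism of G, and (2) every automorphism of G extends to an automorphism of G̃. -/

import Mathlib

/-- An automorphism of a hypergraph `(X, M)`: a permutation of the ambient type that
fixes every vertex outside `X` (so it is essentially a permutation of `X`) and
preserves the edge set `M`. -/
def IsAuto {V : Type*} [DecidableEq V] (X : Finset V) (M : Finset (Finset V))
    (σ : Equiv.Perm V) : Prop :=
  (∀ v ∉ X, σ v = v) ∧ ∀ E : Finset V, E ∈ M ↔ E.image σ ∈ M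

/-- Vertex set of the hypergraph G̃ obtained from (X, M) by adding two fresh
vertices `Sum.inr (E, 0)`, `Sum.inr (E, 1)` for each edge E ∈ M. -/
def tildeVerts {V : Type*} [DecidableEq V] (X : Finset V) (M : Finset (Finset V)) :
    Finset (V ⊕ (Finset V × Fin 2)) :=
  X.image Sum.inl ∪ M.biUnion (fun E => {Sum.inr (E, 0), Sum.inr (E, 1)})

/-- Edge set of the hypergraph G̃: each edge E ∈ M is enlarged by its two fresh
vertices. -/
def tildeEdges {V : Type*} [DecidableEq V] (M : Finset (Finset V)) :
    Finset (Finset (V ⊕ (Finset V × Fin 2))) :=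
  M.image (fun E => E.image Sum.inl ∪ {Sum.inr (E, 0), Sum.inr (E, 1)})

section Aux
variable {V : Type} [DecidableEq V]

def tform (E : Finset V) : Finset (V ⊕ (Finset V × Fin 2)) :=
  E.image Sum.inl ∪ {Sum.inr (E, 0), Sum.inr (E, 1)}

lemma tildeEdges_eq (M : Finset (Finset V)) : tildeEdges M = M.image tform := rfl

lemma img_img (σ : Equiv.Perm V) (s : Finset V) : (s.image σ).image σ.symm = s := by
  rw [Finset.image_image]; simp

lemma img_img' (σ : Equiv.Perm V) (s : Finset V) : (s.image σ.symm).image σ = s := by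
  rw [Finset.image_image]; simp

lemma memM_symm {M : Finset (Finset V)} {σ : Equiv.Perm V}
    (hE : ∀ F, F ∈ M ↔ F.image σ ∈ M) (F : Finset V) :
    F ∈ M ↔ F.image σ.symm ∈ M := by
  rw [hE (F.image σ.symm), img_img']

lemma isAuto_symm {W : Type*} [DecidableEq W] {S : Finset W} {N : Finset (Finset W)}
    {τ : Equiv.Perm W} (h : IsAuto S N τ) : IsAuto S N τ.symm := by
  obtain ⟨h1, h2⟩ := h
  refine ⟨fun v hv => ?_, fun E => ?_⟩
  · conv_lhs => rw [← h1 v hv]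
    simp
  · rw [h2 (E.image τ.symm), Finset.image_image]
    simp

lemma tform_image {σ : Equiv.Perm V}
    (τ : Equiv.Perm (V ⊕ (Finset V × Fin 2)))
    (hl : ∀ v, τ (Sum.inl v) = Sum.inl (σ v))
    (E : Finset V)
    (hr : ∀ i : Fin 2, τ (Sum.inr (E, i)) = Sum.inr (E.image σ, i)) :
    (tform E).image τ = tform (E.image σ) := by
  unfold tform
  rw [Finset.image_union, Finset.image_image]
  congr 1
  · rw [Finset.image_image]
    congr 1
    ext v
    simp [hl]
  · simp [hr 0, hr 1]

/-- forward edge preservation for the extension part. -/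
lemma push_edge {M : Finset (Finset V)} {σ : Equiv.Perm V}
    {τ : Equiv.Perm (V ⊕ (Finset V × Fin 2))}
    (hE : ∀ F, F ∈ M ↔ F.image σ ∈ M)
    (hl : ∀ v, τ (Sum.inl v) = Sum.inl (σ v))
    (hr : ∀ E ∈ M, ∀ i : Fin 2, τ (Sum.inr (E, i)) = Sum.inr (E.image σ, i))
    {Et : Finset (V ⊕ (Finset V × Fin 2))} (h : Et ∈ tildeEdges M) :
    Et.image τ ∈ tildeEdges M := by
  rw [tildeEdges_eq] at h ⊢
  obtain ⟨E, hEM, rfl⟩ := Finset.mem_image.mp h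
  rw [tform_image τ hl E (hr E hEM)]
  exact Finset.mem_image_of_mem _ ((hE E).mp hEM)

/-- forward edge preservation for the restriction part. -/
lemma restrict_edge {M : Finset (Finset V)} {σ : Equiv.Perm V}
    {τ : Equiv.Perm (V ⊕ (Finset V × Fin 2))}
    (hl : ∀ v, τ (Sum.inl v) = Sum.inl (σ v))
    (hedge : ∀ Et, Et ∈ tildeEdges M ↔ Et.image τ ∈ tildeEdges M)
    {E : Finset V} (hEM : E ∈ M) : E.image σ ∈ M := by
  have hninl : ∀ (p : Finset V × Fin 2) (w : V), τ (Sum.inr p) ≠ Sum.inl w := by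
    intro p w h
    have h2 : τ (Sum.inl (σ.symm w)) = Sum.inl w := by rw [hl]; simp
    have := τ.injective (h.trans h2.symm)
    exact absurd this (by simp)
  have h1 : tform E ∈ tildeEdges M := by
    rw [tildeEdges_eq]; exact Finset.mem_image_of_mem _ hEM
  have h2 := (hedge _).mp h1
  rw [tildeEdges_eq] at h2
  obtain ⟨F, hF, hFeq⟩ := Finset.mem_image.mp h2
  have him : (tform E).image τ =
      (E.image σ).image Sum.inl ∪ {τ (Sum.inr (E, 0)), τ (Sum.inr (E, 1))} := by
    unfold tform
    rw [Finset.image_union]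
    congr 1
    · rw [Finset.image_image, Finset.image_image]
      congr 1
      ext v
      simp [hl]
    · simp
  have key : F = E.image σ := by
    ext w
    constructor
    · intro hw
      have hwm : Sum.inl w ∈ (tform E).image τ := by
        rw [← hFeq]
        exact Finset.mem_union_left _ (Finset.mem_image_of_mem _ hw)
      rw [him] at hwm
      rcases Finset.mem_union.mp hwm with h | h
      · rcases Finset.mem_image.mp h with ⟨u, hu, huw⟩
        exact (Sum.inl.inj huw) ▸ hu
      · exfalso
        rcases Finset.mem_insert.mp h with h | h
        · exact hninl _ w h.symm
        · exact hninl _ w (Finset.mem_singleton.mp h).symm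
    · intro hw
      have hwm : Sum.inl w ∈ tform F := by
        rw [hFeq, him]
        exact Finset.mem_union_left _ (Finset.mem_image_of_mem _ hw)
      unfold tform at hwm
      rcases Finset.mem_union.mp hwm with h | h
      · rcases Finset.mem_image.mp h with ⟨u, hu, huw⟩
        rw [Sum.inl.injEq] at huw
        rwa [← huw]
      · exfalso
        rcases Finset.mem_insert.mp h with h | h
        · exact Sum.inl_ne_inr h
        · exact Sum.inl_ne_inr (Finset.mem_singleton.mp h)
  rw [← key]; exact hF

end Aux

/-- (1) Every automorphism of G̃ mapping the original vertex set X into itself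
restricts to an automorphism of G = (X, M); (2) every automorphism of G extends
to an automorphism of G̃. -/
theorem stmt_16 {V : Type} [DecidableEq V] (X : Finset V) (M : Finset (Finset V))
    (hsub : ∀ E ∈ M, E ⊆ X) :
    (∀ τ : Equiv.Perm (V ⊕ (Finset V × Fin 2)),
      IsAuto (tildeVerts X M) (tildeEdges M) τ →
      (∀ v ∈ X, ∃ w ∈ X, τ (Sum.inl v) = Sum.inl w) →
      ∃ σ : Equiv.Perm V, IsAuto X M σ ∧ ∀ v : V, τ (Sum.inl v) = Sum.inl (σ v)) ∧
    (∀ σ : Equiv.Perm V, IsAuto X M σ →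
      ∃ τ : Equiv.Perm (V ⊕ (Finset V × Fin 2)),
        IsAuto (tildeVerts X M) (tildeEdges M) τ ∧
        ∀ v : V, τ (Sum.inl v) = Sum.inl (σ v)) := by
  constructor
  · -- restriction
    intro τ hA hX
    have hout : ∀ v ∉ X, τ (Sum.inl v) = Sum.inl v := by
      intro v hv
      apply hA.1
      simp [tildeVerts, hv]
    have hall : ∀ v, ∃ w, τ (Sum.inl v) = Sum.inl w ∧ (v ∈ X → w ∈ X) := by
      intro v
      by_cases hv : v ∈ X
      · obtain ⟨w, hwX, hw⟩ := hX v hv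
        exact ⟨w, hw, fun _ => hwX⟩
      · exact ⟨v, hout v hv, fun h => absurd h hv⟩
    set s : V → V := fun v => Sum.elim id (fun _ => v) (τ (Sum.inl v)) with hs_def
    have hs : ∀ v, τ (Sum.inl v) = Sum.inl (s v) := by
      intro v
      obtain ⟨w, hw, _⟩ := hall v
      simp only [hs_def, hw]
      rfl
    have hsX : ∀ v ∈ X, s v ∈ X := by
      intro v hv
      obtain ⟨w, hw, hw2⟩ := hall v
      have : s v = w := Sum.inl.inj ((hs v).symm.trans hw)
      rw [this]; exact hw2 hv
    have hsout : ∀ v ∉ X, s v = v := by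
      intro v hv
      exact Sum.inl.inj ((hs v).symm.trans (hout v hv))
    have hsinj : Function.Injective s := by
      intro a b h
      have : τ (Sum.inl a) = τ (Sum.inl b) := by rw [hs a, hs b, h]
      exact Sum.inl.inj (τ.injective this)
    have hssurj : Function.Surjective s := by
      intro w
      by_cases hw : w ∈ X
      · obtain ⟨a, ha, hae⟩ := Finset.surj_on_of_inj_on_of_card_le (s := X) (t := X)
          (fun a _ => s a) (fun a ha => hsX a ha)
          (fun a₁ a₂ _ _ h => hsinj h) le_rfl w hw
        exact ⟨a, hae.symm⟩
      · exact ⟨w, hsout w hw⟩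
    let σ : Equiv.Perm V := Equiv.ofBijective s ⟨hsinj, hssurj⟩
    have hσ : ∀ v, σ v = s v := fun v => rfl
    have hl : ∀ v, τ (Sum.inl v) = Sum.inl (σ v) := fun v => hs v
    have hl' : ∀ v, τ.symm (Sum.inl v) = Sum.inl (σ.symm v) := by
      intro v
      apply τ.injective
      rw [Equiv.apply_symm_apply, hl, Equiv.apply_symm_apply]
    refine ⟨σ, ⟨fun v hv => hsout v hv, fun E => ?_⟩, hl⟩
    constructor
    · intro hEM
      exact restrict_edge hl hA.2 hEM
    · intro hEM
      have := restrict_edge hl' (isAuto_symm hA).2 hEM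
      rwa [img_img] at this
  · -- extension
    intro σ hA
    obtain ⟨hfix, hE⟩ := hA
    let ρ : Equiv.Perm (Finset V × Fin 2) :=
      { toFun := fun p => if p.1 ∈ M then (p.1.image σ, p.2) else p
        invFun := fun p => if p.1 ∈ M then (p.1.image σ.symm, p.2) else p
        left_inv := by
          intro p
          by_cases h : p.1 ∈ M
          · simp only [h, if_pos, (hE p.1).mp h, img_img]
          · simp only [h, if_neg, if_false]
        right_inv := by
          intro p
          by_cases h : p.1 ∈ M
          · simp only [h, if_pos, (memM_symm hE p.1).mp h, img_img']
          · simp only [h, if_neg, if_false] }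
    let τ : Equiv.Perm (V ⊕ (Finset V × Fin 2)) := Equiv.sumCongr σ ρ
    have hl : ∀ v, τ (Sum.inl v) = Sum.inl (σ v) := fun v => rfl
    have hr : ∀ E ∈ M, ∀ i : Fin 2, τ (Sum.inr (E, i)) = Sum.inr (E.image σ, i) := by
      intro E hEM i
      simp only [τ, Equiv.sumCongr_apply, Sum.map_inr]
      simp [ρ, hEM]
    have hl' : ∀ v, τ.symm (Sum.inl v) = Sum.inl (σ.symm v) := by
      intro v
      apply τ.injective
      rw [Equiv.apply_symm_apply, hl, Equiv.apply_symm_apply]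
    have hr' : ∀ E ∈ M, ∀ i : Fin 2, τ.symm (Sum.inr (E, i)) = Sum.inr (E.image σ.symm, i) := by
      intro E hEM i
      apply τ.injective
      rw [Equiv.apply_symm_apply, hr _ ((memM_symm hE E).mp hEM), img_img']
    refine ⟨τ, ⟨?_, ?_⟩, hl⟩
    · intro x hx
      match x with
      | Sum.inl v =>
        have hv : v ∉ X := by
          intro hv
          exact hx (Finset.mem_union_left _ (Finset.mem_image_of_mem _ hv))
        rw [hl, hfix v hv]
      | Sum.inr (F, i) =>
        have hF : F ∉ M := by
          intro hF
          apply hx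
          apply Finset.mem_union_right
          apply Finset.mem_biUnion.mpr
          refine ⟨F, hF, ?_⟩
          fin_cases i <;> simp
        simp only [τ, Equiv.sumCongr_apply, Sum.map_inr]
        simp [ρ, hF]
    · intro Et
      constructor
      · exact push_edge hE hl hr
      · intro h
        have := push_edge (memM_symm hE) hl' hr' h
        rwa [Finset.image_image, Equiv.symm_comp_self, Finset.image_id] at this
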